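/- arXiv:1212.3904 — 8 statements merged into one kernel-verified Lean document; each statement's English description precedes it below -/
import Mathlib

section
/- If a left-symmetric algebra A satisfies any two of the three identities (N): (x·y)·z = (x·z)·y, (D): (x·y)·z = (z·y)·x, and (E): (x·y)·z = (y·x)·z, for all x,y,z ∈ A, then it satisfies the third identity as well. -/
/-- For a left-symmetric algebra, any two of the identities
(N) `(x*y)*z = (x*z)*y`, (D) `(x*y)*z = (z*y)*x`, (E) `(x*y)*z = (y*x)*z`
imply the third. -/
theorem lsa_two_of_three {F A : Type*} [Field F] [NonUnitalNonAssocRing A]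
    [Module F A] [SMulCommClass F A A] [IsScalarTower F A A]
    (hls : ∀ x y z : A, (x*y)*z - x*(y*z) = (y*x)*z - y*(x*z)) :
    ((∀ x y z : A, (x*y)*z = (x*z)*y) → (∀ x y z : A, (x*y)*z = (z*y)*x) →
        (∀ x y z : A, (x*y)*z = (y*x)*z)) ∧
    ((∀ x y z : A, (x*y)*z = (x*z)*y) → (∀ x y z : A, (x*y)*z = (y*x)*z) →
        (∀ x y z : A, (x*y)*z = (z*y)*x)) ∧
    ((∀ x y z : A, (x*y)*z = (z*y)*x) → (∀ x y z : A, (x*y)*z = (y*x)*z) →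
        (∀ x y z : A, (x*y)*z = (x*z)*y)) := by
  refine ⟨fun hN hD x y z => ?_, fun hN hE x y z => ?_, fun hD hE x y z => ?_⟩
  · rw [hN x y z, hD x z y, hN y z x]
  · rw [hN x y z, hE x z y, hN z x y]
  · rw [hD x y z, hE z y x, hD y z x]
end

section
/- If a Lie algebra G admits a compatible associative product (an associative product with x·y - y·x = [x,y]) that is Novikov (i.e., (x·y)·z = (x·z)·y), then G is 2-step solvable. -/
/-- A Lie algebra admitting a compatible associative Novikov product is
2-step solvable. -/
theorem novikov_assoc_two_step_solvable {F G : Type*} [Field F] [LieRing G]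
    [LieAlgebra F G] (mul : G →ₗ[F] G →ₗ[F] G)
    (hassoc : ∀ x y z : G, mul (mul x y) z = mul x (mul y z))
    (hcompat : ∀ x y : G, mul x y - mul y x = ⁅x, y⁆)
    (hnov : ∀ x y z : G, mul (mul x y) z = mul (mul x z) y) :
    LieAlgebra.derivedSeries F G 2 = ⊥ := by
  have hkill : ∀ z x y : G, mul z ⁅x, y⁆ = 0 := by
    intro z x y
    rw [← hcompat, map_sub, ← hassoc, ← hassoc, hnov z x y, sub_self]
  have hkill' : ∀ z : G, ∀ a ∈ LieAlgebra.derivedSeries F G 1, mul z a = 0 := by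
    intro z a ha
    have h1 : LieAlgebra.derivedSeries F G 1 = ⁅(⊤ : LieIdeal F G), (⊤ : LieIdeal F G)⁆ := rfl
    rw [h1, ← LieSubmodule.mem_toSubmodule,
      LieSubmodule.lieIdeal_oper_eq_linear_span] at ha
    refine Submodule.span_induction ?_ ?_ ?_ ?_ ha
    · rintro m ⟨⟨x, -⟩, ⟨y, -⟩, rfl⟩; exact hkill z x y
    · exact map_zero _
    · intro p q _ _ hp hq; rw [map_add, hp, hq, add_zero]
    · intro c p _ hp; rw [map_smul, hp, smul_zero]
  show ⁅LieAlgebra.derivedSeries F G 1, LieAlgebra.derivedSeries F G 1⁆ = ⊥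
  rw [LieSubmodule.lie_eq_bot_iff]
  intro x hx m hm
  rw [← hcompat, hkill' x m hm, hkill' m x hx, sub_zero]
end

section
/- Let A be a left-symmetric algebra and let Z_Lie = {z ∈ A : [z,x] = 0 for all x ∈ A} be the center of the associated Lie algebra. Then for every z ∈ Z_Lie and x,y ∈ A, the associator (x,y,z) = (x·y)·z - x·(y·z) vanishes. Consequently, the algebra center Z(A) equals {z ∈ Z_Lie : (z,x,y) = 0 for all x,y ∈ A}. -/
/-- In a left-symmetric algebra, if `z` is in the center of the associated
Lie algebra then `(x,y,z) = 0` for all `x,y`; consequently the algebra center equals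
`{z Lie-central : (z,x,y) = 0 for all x,y}`. -/
theorem lsa_center_characterization {F A : Type*} [Field F] [NonUnitalNonAssocRing A]
    [Module F A] [SMulCommClass F A A] [IsScalarTower F A A]
    (hls : ∀ x y z : A, (x*y)*z - x*(y*z) = (y*x)*z - y*(x*z)) :
    (∀ z : A, (∀ x : A, z*x = x*z) → ∀ x y : A, (x*y)*z - x*(y*z) = 0) ∧
    ({z : A | (∀ x : A, z*x = x*z) ∧ ∀ x y : A,
        (z*x)*y - z*(x*y) = 0 ∧ (x*z)*y - x*(z*y) = 0 ∧ (x*y)*z - x*(y*z) = 0}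
      = {z : A | (∀ x : A, z*x = x*z) ∧ ∀ x y : A, (z*x)*y - z*(x*y) = 0}) := by
  have key : ∀ z : A, (∀ x : A, z*x = x*z) → ∀ x y : A, (x*y)*z - x*(y*z) = 0 := by
    intro z hz x y
    have h1 := hls z x y
    rw [hz x] at h1
    have h2 : z*(x*y) = x*(z*y) := by rwa [sub_right_inj] at h1
    rw [← hz (x*y), ← hz y, h2, sub_self]
  refine ⟨key, Set.ext fun z => ⟨fun ⟨hz, h⟩ => ⟨hz, fun x y => (h x y).1⟩,
    fun ⟨hz, h⟩ => ⟨hz, fun x y => ⟨h x y, ?_, key z hz x y⟩⟩⟩⟩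
  rw [hls x z y]
  exact h x y
end

section
/- If A is a Novikov algebra, then every element z of the center of the associated Lie algebra satisfies (z,x,y) = 0 for all x,y ∈ A; hence the algebra center of A coincides with the Lie center of A. -/
/-- In a Novikov algebra, every Lie-central element `z` satisfies
`(z,x,y) = 0`; hence the algebra center coincides with the Lie center. -/
theorem novikov_center_eq_lie_center {F A : Type*} [Field F] [NonUnitalNonAssocRing A]
    [Module F A] [SMulCommClass F A A] [IsScalarTower F A A]
    (hls : ∀ x y z : A, (x*y)*z - x*(y*z) = (y*x)*z - y*(x*z))
    (hN : ∀ x y z : A, (x*y)*z = (x*z)*y) :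
    (∀ z : A, (∀ x : A, z*x = x*z) → ∀ x y : A, (z*x)*y - z*(x*y) = 0) ∧
    ({z : A | (∀ x : A, z*x = x*z) ∧ ∀ x y : A,
        (z*x)*y - z*(x*y) = 0 ∧ (x*z)*y - x*(z*y) = 0 ∧ (x*y)*z - x*(y*z) = 0}
      = {z : A | ∀ x : A, z*x = x*z}) := by
  have key : ∀ z : A, (∀ x : A, z*x = x*z) → ∀ x y : A, (z*x)*y - z*(x*y) = 0 := by
    intro z hz x y
    rw [hz x, hN x z y, ← hz (x*y)]
    exact sub_self _
  refine ⟨key, ?_⟩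
  ext z
  simp only [Set.mem_setOf_eq]
  constructor
  · exact fun h => h.1
  · intro hz
    refine ⟨hz, fun x y => ?_⟩
    have h1 := key z hz x y
    have h2 : (x*z)*y - x*(z*y) = 0 := by rw [← hls]; exact h1
    refine ⟨h1, h2, ?_⟩
    have : (x*y)*z = x*(y*z) := by
      have := sub_eq_zero.mp h2
      calc (x*y)*z = (x*z)*y := hN x y z
        _ = x*(z*y) := this
        _ = x*(y*z) := by rw [hz y]
    rw [this, sub_self]
end

section
/- If A is a derivation algebra, then every element z of the center of the associated Lie algebra satisfies (z,x,y) = 0 for all x,y ∈ A; hence the algebra center of A coincides with the Lie center of A. -/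
/-- In a derivation algebra, every Lie-central element `z` satisfies
`(z,x,y) = 0`; hence the algebra center coincides with the Lie center. -/
theorem derivation_center_eq_lie_center {F A : Type*} [Field F] [NonUnitalNonAssocRing A]
    [Module F A] [SMulCommClass F A A] [IsScalarTower F A A]
    (hls : ∀ x y z : A, (x*y)*z - x*(y*z) = (y*x)*z - y*(x*z))
    (hD : ∀ x y z : A, (x*y)*z = (z*y)*x) :
    (∀ z : A, (∀ x : A, z*x = x*z) → ∀ x y : A, (z*x)*y - z*(x*y) = 0) ∧
    ({z : A | (∀ x : A, z*x = x*z) ∧ ∀ x y : A,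
        (z*x)*y - z*(x*y) = 0 ∧ (x*z)*y - x*(z*y) = 0 ∧ (x*y)*z - x*(y*z) = 0}
      = {z : A | ∀ x : A, z*x = x*z}) := by
  have key : ∀ z : A, (∀ x : A, z*x = x*z) → ∀ x y : A, (z*x)*y - z*(x*y) = 0 := by
    intro z hz x y
    have h1 : (z*x)*y = z*(x*y) := by
      calc (z*x)*y = (x*z)*y := by rw [hz x]
        _ = (y*z)*x := hD x z y
        _ = (z*y)*x := by rw [hz y]
        _ = (x*y)*z := (hD x y z).symm
        _ = z*(x*y) := (hz (x*y)).symm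
    rw [h1, sub_self]
  refine ⟨key, ?_⟩
  ext z
  simp only [Set.mem_setOf_eq]
  constructor
  · exact fun h => h.1
  · intro hz
    refine ⟨hz, fun x y => ?_⟩
    have h1 := key z hz x y
    -- (x,z,y) = (z,x,y) by left-symmetry
    have h2 : (x*z)*y - x*(z*y) = 0 := by
      have := hls z x y
      rw [hz x] at this
      have h2' : z*(x*y) = x*(z*y) := sub_right_injective this
      calc (x*z)*y - x*(z*y) = (z*x)*y - z*(x*y) := by rw [hz x, h2']
        _ = 0 := h1
    have h3 : (x*y)*z - x*(y*z) = 0 := by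
      have e1 : (x*y)*z = z*(x*y) := (hz (x*y)).symm
      have e2 : z*(x*y) = (z*x)*y := (sub_eq_zero.mp h1).symm
      have e3 : (z*x)*y = (x*z)*y := by rw [hz x]
      have e4 : (x*z)*y = x*(z*y) := sub_eq_zero.mp h2
      have e5 : x*(z*y) = x*(y*z) := by rw [hz y]
      rw [e1, e2, e3, e4, e5, sub_self]
    exact ⟨h1, h2, h3⟩
end

section
/- If A is a Novikov algebra, then its center Z(A) (which equals the Lie center) is a two-sided ideal of A: for all x ∈ A and z ∈ Z(A), both x·z and z·x lie in Z(A). -/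
/-- In a Novikov algebra, the center (= Lie center) is a two-sided ideal:
for central `z` and any `x`, both `x*z` and `z*x` are central. -/
theorem novikov_center_is_ideal {F A : Type*} [Field F] [NonUnitalNonAssocRing A]
    [Module F A] [SMulCommClass F A A] [IsScalarTower F A A]
    (hls : ∀ x y z : A, (x*y)*z - x*(y*z) = (y*x)*z - y*(x*z))
    (hN : ∀ x y z : A, (x*y)*z = (x*z)*y) :
    ∀ z : A, (∀ x : A, z*x = x*z) → ∀ x : A,
      (∀ y : A, (x*z)*y = y*(x*z)) ∧ (∀ y : A, (z*x)*y = y*(z*x)) := by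
  intro z hz x
  -- L1 : z left-associates
  have L1 : ∀ a b : A, (z*a)*b = z*(a*b) := by
    intro a b
    calc (z*a)*b = (a*z)*b := by rw [hz]
    _ = (a*b)*z := by rw [hN]
    _ = z*(a*b) := by rw [hz]
  -- L2 : z right-associates
  have L2 : ∀ a b : A, (a*b)*z = a*(b*z) := by
    intro a b
    have h := hls a z b
    rw [L1, sub_self, sub_eq_zero] at h
    calc (a*b)*z = (a*z)*b := hN a b z
    _ = a*(z*b) := h
    _ = a*(b*z) := by rw [hz]
  -- L3 : (a*b)*z = (b*a)*z
  have L3 : ∀ a b : A, (a*b)*z = (b*a)*z := by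
    intro a b
    calc (a*b)*z = (a*z)*b := hN a b z
    _ = (z*a)*b := by rw [hz]
    _ = (z*b)*a := by rw [← hN]
    _ = (b*z)*a := by rw [hz]
    _ = (b*a)*z := (hN b a z).symm
  have key : ∀ y : A, (x*z)*y = y*(x*z) := by
    intro y
    have h := hls y x z
    rw [L3 y x, ← L2 x y, sub_self, sub_eq_zero] at h
    calc (x*z)*y = (x*y)*z := (hN x y z).symm
    _ = y*(x*z) := h
  exact ⟨key, fun y => by rw [hz x]; exact key y⟩
end

section
/- If A is a derivation algebra, then its center Z(A) (which equals the Lie center) is a two-sided ideal of A. -/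
/-- In a derivation algebra, the center (= Lie center) is a two-sided ideal:
for central `z` and any `x`, both `x*z` and `z*x` are central. -/
theorem derivation_center_is_ideal {F A : Type*} [Field F] [NonUnitalNonAssocRing A]
    [Module F A] [SMulCommClass F A A] [IsScalarTower F A A]
    (hls : ∀ x y z : A, (x*y)*z - x*(y*z) = (y*x)*z - y*(x*z))
    (hD : ∀ x y z : A, (x*y)*z = (z*y)*x) :
    ∀ z : A, (∀ x : A, z*x = x*z) → ∀ x : A,
      (∀ y : A, (x*z)*y = y*(x*z)) ∧ (∀ y : A, (z*x)*y = y*(z*x)) := by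
  intro z hz x
  have key : ∀ y : A, (x*z)*y = y*(x*z) := by
    intro y
    have h1 : y*(z*x) = z*(y*x) := by
      have h := hls y z x
      rw [hz y] at h
      exact sub_right_injective h
    calc (x*z)*y = (z*x)*y := by rw [hz x]
      _ = (y*x)*z := (hD y x z).symm
      _ = z*(y*x) := (hz (y*x)).symm
      _ = y*(z*x) := h1.symm
      _ = y*(x*z) := by rw [hz x]
  refine ⟨key, fun y => ?_⟩
  rw [hz x]; exact key y
end

section
/- Let A be a left-symmetric algebra whose associated Lie algebra G_A is 2-step nilpotent ([A,[A,A]] = 0), and suppose there is a linear endomorphism f of A with x·y = [f(x), y] for all x,y, satisfying [x,y] = [f(x),y] + [x,f(y)] and f([x,y]) - [f(x),f(y)] ∈ Z(G_A) for all x,y. Then A satisfies [x,y]·z = 0 for all x,y,z. -/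
/-- An inner derivation algebra (left-symmetric, `x*y = [f x, y]` with the
stated conditions on `f`) whose associated Lie algebra is 2-step nilpotent satisfies
`[x,y]*z = 0`. -/
theorem inner_derivation_two_step_nilpotent_E {F A : Type*} [Field F]
    [NonUnitalNonAssocRing A] [Module F A] [SMulCommClass F A A] [IsScalarTower F A A]
    (hls : ∀ x y z : A, (x*y)*z - x*(y*z) = (y*x)*z - y*(x*z))
    (hnil : ∀ x y z : A, x*(y*z - z*y) - (y*z - z*y)*x = 0)
    (f : A →ₗ[F] A)
    (hf0 : ∀ x y : A, x*y = f x * y - y * f x)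
    (hf1 : ∀ x y : A, x*y - y*x = (f x * y - y * f x) + (x * f y - f y * x))
    (hf2 : ∀ x y w : A,
      (f (x*y - y*x) - (f x * f y - f y * f x)) * w
        = w * (f (x*y - y*x) - (f x * f y - f y * f x))) :
    ∀ x y z : A, (x*y - y*x)*z = 0 := by
  intro x y z
  have h1 : x*(y*z) = 0 := by
    rw [hf0 x (y*z), hf0 y z]; exact hnil (f x) (f y) z
  have h2 : y*(x*z) = 0 := by
    rw [hf0 y (x*z), hf0 x z]; exact hnil (f y) (f x) z
  have h := hls x y z
  rw [h1, h2, sub_zero, sub_zero] at h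
  rw [sub_mul, h, sub_self]
end
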